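/- Let X be an n×p real matrix with rows xᵢ, S = diag(s₁,…,sₙ), counts mᵢ, responses yᵢ, π(t) = 1/(1 + exp(−t)), μ(ρ·Xβ)ᵢ = mᵢ·π(ρ·xᵢᵀβ), and R(β) = diag(mᵢ·π(xᵢᵀβ)(1 − π(xᵢᵀβ))). Suppose h : ℝᵖ → ℝ is differentiable in a neighborhood of β* ∈ ℝᵖ and satisfies the stationarity equation βᵀXᵀSy − βᵀXᵀS μ(h(β)·Xβ) = 0 for all β in that neighborhood, with h(β*) = 1, XᵀS(y − μ(Xβ*)) = 0, and c(β*) := (β*)ᵀXᵀSR(β*)Xβ* ≠ 0. Then the gradient of h at β* is ∇h(β*) = −c(β*)⁻¹ · XᵀSR(β*)Xβ*. (This is the implicit-function-theorem computation in the proof of Theorem 1.) -/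

import Mathlib

open Matrix

/-- The logistic function π(t) = 1/(1 + exp(−t)). -/
noncomputable def piLogit (t : ℝ) : ℝ := 1 / (1 + Real.exp (-t))

/-- The Newton-Raphson weight matrix R(β) = diag(mᵢ·π(xᵢᵀβ)(1 − π(xᵢᵀβ))). -/
noncomputable def Rmat (n p : ℕ) (X : Matrix (Fin n) (Fin p) ℝ)
    (m : Fin n → ℝ) (β : Fin p → ℝ) : Matrix (Fin n) (Fin n) ℝ :=
  Matrix.diagonal fun i =>
    m i * (piLogit ((X *ᵥ β) i) * (1 - piLogit ((X *ᵥ β) i)))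

/-- Implicit-function-theorem computation in the proof of Theorem 1: the
gradient of the optimal rescaling map h at β* is
∇h(β*) = −c(β*)⁻¹·XᵀSR(β*)Xβ*, where c(β*) = (β*)ᵀXᵀSR(β*)Xβ*. -/
lemma piLogit_hasDerivAt (t : ℝ) :
    HasDerivAt piLogit (piLogit t * (1 - piLogit t)) t := by
  have hne : (1 : ℝ) + Real.exp (-t) ≠ 0 := by positivity
  have h1 : HasDerivAt (fun u : ℝ => 1 + Real.exp (-u)) (-Real.exp (-t)) t := by
    simpa using ((Real.hasDerivAt_exp (-t)).comp t ((hasDerivAt_id t).neg)).const_add 1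
  have h2 := (hasDerivAt_const t (1 : ℝ)).div h1 hne
  have heq : (0 * (1 + Real.exp (-t)) - 1 * -Real.exp (-t)) / (1 + Real.exp (-t)) ^ 2
      = piLogit t * (1 - piLogit t) := by
    unfold piLogit; field_simp; ring
  rw [heq] at h2
  exact h2

theorem gradient_of_optimal_rescaling (n p : ℕ) (X : Matrix (Fin n) (Fin p) ℝ)
    (s m y : Fin n → ℝ) (h : (Fin p → ℝ) → ℝ) (βs : Fin p → ℝ)
    (U : Set (Fin p → ℝ)) (hU : U ∈ nhds βs)
    (hdiff : ∀ β ∈ U, DifferentiableAt ℝ h β)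
    (hstat : ∀ β ∈ U,
      β ⬝ᵥ ((Xᵀ * Matrix.diagonal s) *ᵥ y)
        - β ⬝ᵥ ((Xᵀ * Matrix.diagonal s)
            *ᵥ fun i => m i * piLogit (h β * (X *ᵥ β) i)) = 0)
    (hhs : h βs = 1)
    (hscore : (Xᵀ * Matrix.diagonal s)
      *ᵥ (y - fun i => m i * piLogit ((X *ᵥ βs) i)) = 0)
    (hc : βs ⬝ᵥ ((Xᵀ * Matrix.diagonal s * Rmat n p X m βs * X) *ᵥ βs) ≠ 0) :
    ∀ v : Fin p → ℝ,
      fderiv ℝ h βs v =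
        (-(βs ⬝ᵥ ((Xᵀ * Matrix.diagonal s * Rmat n p X m βs * X) *ᵥ βs))⁻¹
          • ((Xᵀ * Matrix.diagonal s * Rmat n p X m βs * X) *ᵥ βs)) ⬝ᵥ v := by
  intro v
  -- notation
  set u : Fin n → ℝ := X *ᵥ βs with hu
  set w : Fin n → ℝ := fun i => s i * (m i * (piLogit (u i) * (1 - piLogit (u i)))) with hw
  -- key identity: β ⬝ᵥ ((Xᵀ * diagonal s) *ᵥ g) = ∑ i, s i * (X *ᵥ β) i * g i
  have key : ∀ (β : Fin p → ℝ) (g : Fin n → ℝ),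
      β ⬝ᵥ ((Xᵀ * Matrix.diagonal s) *ᵥ g) = ∑ i, s i * (X *ᵥ β) i * g i := by
    intro β g
    rw [← Matrix.mulVec_mulVec, Matrix.dotProduct_mulVec, Matrix.vecMul_transpose]
    simp only [dotProduct, Matrix.mulVec_diagonal]
    exact Finset.sum_congr rfl fun i _ => by ring
  -- key identity for the matrix M = Xᵀ S R X
  have keyM : ∀ z : Fin p → ℝ,
      ((Xᵀ * Matrix.diagonal s * Rmat n p X m βs * X) *ᵥ βs) ⬝ᵥ z
        = ∑ i, w i * u i * (X *ᵥ z) i := by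
    intro z
    rw [← Matrix.mulVec_mulVec, ← Matrix.mulVec_mulVec, ← Matrix.mulVec_mulVec,
      dotProduct_comm, Matrix.dotProduct_mulVec, Matrix.vecMul_transpose]
    simp only [dotProduct, Matrix.mulVec_diagonal, Rmat, hw, ← hu]
    exact Finset.sum_congr rfl fun i _ => by ring
  -- score is zero
  have hA0 : ∑ i, s i * (X *ᵥ v) i * (y i - m i * piLogit (u i)) = 0 := by
    have := key v (y - fun i => m i * piLogit (u i))
    rw [hscore] at this
    simpa using this.symm
  -- derivative setup
  have hβsU : βs ∈ U := mem_of_mem_nhds hU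
  have hH : HasFDerivAt h (fderiv ℝ h βs) βs := (hdiff βs hβsU).hasFDerivAt
  set H := fderiv ℝ h βs with hHdef
  -- the linear maps β ↦ (X *ᵥ β) i
  set L : Fin n → ((Fin p → ℝ) →L[ℝ] ℝ) := fun i =>
    LinearMap.toContinuousLinearMap
      ((LinearMap.proj i : ((Fin n → ℝ) →ₗ[ℝ] ℝ)).comp X.mulVecLin) with hL
  have hLapp : ∀ i z, L i z = (X *ᵥ z) i := fun i z => rfl
  have hLi : ∀ i, HasFDerivAt (fun β => (X *ᵥ β) i) (L i) βs := fun i =>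
    (L i).hasFDerivAt
  -- derivative of each term
  set D : Fin n → ((Fin p → ℝ) →L[ℝ] ℝ) := fun i =>
    (s i * u i) • (-(m i • ((piLogit (h βs * u i) * (1 - piLogit (h βs * u i)))
        • (h βs • L i + u i • H))))
      + (y i - m i * piLogit (h βs * u i)) • (s i • L i) with hD
  have hterm : ∀ i, HasFDerivAt
      (fun β => s i * (X *ᵥ β) i * (y i - m i * piLogit (h β * (X *ᵥ β) i))) (D i) βs := by
    intro i
    have hg : HasFDerivAt (fun β => h β * (X *ᵥ β) i) (h βs • L i + u i • H) βs :=
      hH.mul (hLi i)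
    have hpi : HasFDerivAt (fun β => piLogit (h β * (X *ᵥ β) i))
        ((piLogit (h βs * u i) * (1 - piLogit (h βs * u i))) • (h βs • L i + u i • H)) βs :=
      by have := (piLogit_hasDerivAt (h βs * u i)).comp_hasFDerivAt βs hg; exact this
    have hrest : HasFDerivAt (fun β => y i - m i * piLogit (h β * (X *ᵥ β) i))
        (-(m i • ((piLogit (h βs * u i) * (1 - piLogit (h βs * u i)))
          • (h βs • L i + u i • H)))) βs := by
      simpa using (hpi.const_mul (m i)).const_sub (y i)
    have hf : HasFDerivAt (fun β => s i * (X *ᵥ β) i) (s i • L i) βs :=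
      (hLi i).const_mul (s i)
    exact hf.mul hrest
  -- G and its derivative
  set G : (Fin p → ℝ) → ℝ := fun β =>
    ∑ i, s i * (X *ᵥ β) i * (y i - m i * piLogit (h β * (X *ᵥ β) i)) with hG
  have hGder : HasFDerivAt G (∑ i, D i) βs :=
    HasFDerivAt.fun_sum fun i _ => hterm i
  -- G vanishes on U
  have hGzero : ∀ β ∈ U, G β = 0 := by
    intro β hβ
    have hs := hstat β hβ
    rw [key β y, key β (fun i => m i * piLogit (h β * (X *ᵥ β) i))] at hs
    rw [hG, ← hs, ← Finset.sum_sub_distrib]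
    exact Finset.sum_congr rfl fun i _ => by ring
  -- hence fderiv G βs = 0
  have hGev : G =ᶠ[nhds βs] (fun _ => (0 : ℝ)) :=
    Filter.eventuallyEq_of_mem hU hGzero
  have hfzero : (∑ i, D i) = 0 := by
    have h1 : fderiv ℝ G βs = ∑ i, D i := hGder.fderiv
    have h2 : fderiv ℝ G βs = 0 := by
      rw [hGev.fderiv_eq]; exact fderiv_const_apply 0
    rw [← h1, h2]
  -- evaluate at v
  have heval : (∑ i, D i) v = 0 := by rw [hfzero]; rfl
  have hexp : ∑ i, ((s i * u i) * (-(m i * ((piLogit (u i) * (1 - piLogit (u i)))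
        * ((X *ᵥ v) i + u i * H v))))
      + (y i - m i * piLogit (u i)) * (s i * (X *ᵥ v) i)) = 0 := by
    rw [← heval]
    rw [ContinuousLinearMap.sum_apply]
    refine Finset.sum_congr rfl fun i _ => ?_
    simp [hD, hLapp, hhs, ContinuousLinearMap.add_apply, ContinuousLinearMap.smul_apply]
    ring
  -- rewrite as linear combination
  have hcomb : ∑ i, ((s i * u i) * (-(m i * ((piLogit (u i) * (1 - piLogit (u i)))
        * ((X *ᵥ v) i + u i * H v))))
      + (y i - m i * piLogit (u i)) * (s i * (X *ᵥ v) i))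
      = (∑ i, s i * (X *ᵥ v) i * (y i - m i * piLogit (u i)))
        - H v * (∑ i, w i * u i * u i) - (∑ i, w i * u i * (X *ᵥ v) i) := by
    rw [Finset.mul_sum, ← Finset.sum_sub_distrib, ← Finset.sum_sub_distrib]
    refine Finset.sum_congr rfl fun i _ => ?_
    simp only [hw]; ring
  rw [hcomb, hA0] at hexp
  -- identify the matrix quantities
  have hcval : βs ⬝ᵥ ((Xᵀ * Matrix.diagonal s * Rmat n p X m βs * X) *ᵥ βs)
      = ∑ i, w i * u i * u i := by
    rw [dotProduct_comm, keyM βs, ← hu]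
  have hBval : ((Xᵀ * Matrix.diagonal s * Rmat n p X m βs * X) *ᵥ βs) ⬝ᵥ v
      = ∑ i, w i * u i * (X *ᵥ v) i := keyM v
  rw [smul_dotProduct, hBval, hcval]
  have hcne : (∑ i, w i * u i * u i) ≠ 0 := by rwa [hcval] at hc
  rw [smul_eq_mul, eq_comm, neg_mul, inv_mul_eq_div, neg_eq_iff_eq_neg, div_eq_iff hcne]
  linarith [hexp]
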